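/- arXiv:2002.07400 — 6 statements merged into one kernel-verified Lean document; each statement's English description precedes it below -/
import Mathlib

section
/- Fix Ψ : {±1/√n}^n → [-1,1]^N and B > 0, and define the hypothesis class H = {x ↦ ⟨Ψ(x), w⟩ : ‖w‖₂ ≤ B}. If k ≤ n/16, then there exists a subset A ⊆ [n] with |A| = k such that the minimal expected hinge loss over H, with respect to the distribution where x is uniform on {±1/√n}^n and y = sign(∏_{i∈A} x_i), is at least 1 − √(2N)·B/2^k. -/
open Finset
open scoped BigOperators Classical

/-- The point of the hypercube `{±1/√n}^n` corresponding to a sign pattern `s`. -/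
noncomputable def pt (n : ℕ) (s : Fin n → Bool) : Fin n → ℝ :=
  fun j => (if s j then 1 else -1) / Real.sqrt n

/-- The parity function `f_A(x) = sign(∏_{i ∈ A} x_i)`. -/
noncomputable def parity {n : ℕ} (A : Finset (Fin n)) (s : Fin n → Bool) : ℝ :=
  Real.sign (∏ i ∈ A, pt n s i)

noncomputable def sg (b : Bool) : ℝ := if b then 1 else -1

lemma sg_mul_self (b : Bool) : sg b * sg b = 1 := by cases b <;> simp [sg]

lemma sg_mul_ne (b c : Bool) (h : b ≠ c) : sg b * sg c = -1 := by
  cases b <;> cases c <;> simp_all [sg]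

lemma sum_chi_sq (n : ℕ) (g : (Fin n → Bool) → ℝ) :
    ∑ A : Finset (Fin n), (∑ s : Fin n → Bool, (∏ i ∈ A, sg (s i)) * g s) ^ 2
      = 2 ^ n * ∑ s : Fin n → Bool, (g s) ^ 2 := by
  have expand : ∀ A : Finset (Fin n),
      (∑ s : Fin n → Bool, (∏ i ∈ A, sg (s i)) * g s) ^ 2
      = ∑ s : Fin n → Bool, ∑ t : Fin n → Bool,
          (g s * g t) * ∏ i ∈ A, (sg (s i) * sg (t i)) := by
    intro A
    rw [sq, Finset.sum_mul_sum]
    refine Finset.sum_congr rfl fun s _ => Finset.sum_congr rfl fun t _ => ?_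
    rw [Finset.prod_mul_distrib]; ring
  simp_rw [expand]
  rw [Finset.sum_comm]
  have key : ∀ s t : Fin n → Bool,
      ∑ A : Finset (Fin n), ∏ i ∈ A, (sg (s i) * sg (t i))
        = if s = t then (2:ℝ) ^ n else 0 := by
    intro s t
    have hrw : (Finset.univ : Finset (Finset (Fin n))) = (Finset.univ : Finset (Fin n)).powerset := by
      rw [Finset.powerset_univ]
    rw [hrw]
    have := Finset.prod_add (fun i : Fin n => sg (s i) * sg (t i)) (fun _ : Fin n => (1:ℝ)) Finset.univ
    simp only [Finset.prod_const_one, mul_one] at this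
    rw [← this]
    by_cases hst : s = t
    · subst hst
      simp [sg_mul_self, Finset.prod_const]
      norm_num
    · simp only [if_neg hst]
      obtain ⟨i, hi⟩ : ∃ i, s i ≠ t i := by
        by_contra h; push_neg at h; exact hst (funext h)
      exact Finset.prod_eq_zero (Finset.mem_univ i) (by rw [sg_mul_ne _ _ hi]; ring)
  have swap2 : ∀ s : Fin n → Bool,
      (∑ A : Finset (Fin n), ∑ t : Fin n → Bool,
        (g s * g t) * ∏ i ∈ A, (sg (s i) * sg (t i)))
      = ∑ t : Fin n → Bool, (g s * g t) * ∑ A : Finset (Fin n), ∏ i ∈ A, (sg (s i) * sg (t i)) := by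
    intro s
    rw [Finset.sum_comm]
    exact Finset.sum_congr rfl fun t _ => (Finset.mul_sum _ _ _).symm
  simp_rw [swap2, key, mul_ite, mul_zero]
  simp [Finset.sum_ite_eq', Finset.mul_sum]
  ring_nf

lemma choose_bound (n k : ℕ) (hk : 16 * k ≤ n) : 4 ^ k ≤ 2 * n.choose k := by
  induction k with
  | zero => simp
  | succ k ih =>
    have ih' := ih (by omega)
    have h1 : n.choose (k+1) * (k+1) = n.choose k * (n - k) := Nat.choose_succ_right_eq n k
    have h2 : 4 * (k+1) ≤ n - k := by omega
    have h3 : 4 ^ (k+1) * (k+1) ≤ 2 * n.choose (k+1) * (k+1) := by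
      calc 4 ^ (k+1) * (k+1) = 4 ^ k * (4 * (k+1)) := by ring
        _ ≤ (2 * n.choose k) * (n - k) := Nat.mul_le_mul ih' h2
        _ = 2 * (n.choose k * (n - k)) := by ring
        _ = 2 * (n.choose (k+1) * (k+1)) := by rw [h1]
        _ = 2 * n.choose (k+1) * (k+1) := by ring
    exact Nat.le_of_mul_le_mul_right h3 k.succ_pos

lemma prod_sg_pm {n : ℕ} (A : Finset (Fin n)) (s : Fin n → Bool) :
    (∏ i ∈ A, sg (s i)) = 1 ∨ (∏ i ∈ A, sg (s i)) = -1 := by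
  induction A using Finset.induction_on with
  | empty => left; simp
  | insert _ _ ha ih =>
    rw [Finset.prod_insert ha]
    rcases ih with h | h <;> rw [h] <;> cases s ‹Fin n› <;> simp [sg]

lemma parity_eq {n : ℕ} (hn : 0 < n) (A : Finset (Fin n)) (s : Fin n → Bool) :
    parity A s = ∏ i ∈ A, sg (s i) := by
  have hs : (0:ℝ) < Real.sqrt n := Real.sqrt_pos.mpr (by exact_mod_cast hn)
  have hp : (0:ℝ) < (Real.sqrt n) ^ A.card := pow_pos hs _
  have hprod : (∏ i ∈ A, pt n s i) = (∏ i ∈ A, sg (s i)) / (Real.sqrt n) ^ A.card := by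
    unfold pt sg
    rw [Finset.prod_div_distrib, Finset.prod_const]
  rcases prod_sg_pm A s with h | h
  · rw [parity, hprod, h]
    rw [Real.sign_of_pos (by positivity)]
  · rw [parity, hprod, h]
    rw [Real.sign_of_neg (by rw [neg_div]; exact neg_neg_iff_pos.mpr (by positivity))]

/-- If `k ≤ n/16`, there is a size-`k` subset `A` such that every linear classifier
`x ↦ ⟨Ψ(x), w⟩` with `‖w‖₂ ≤ B` has expected hinge loss at least `1 - √(2N)·B/2^k` on the
distribution with `x` uniform on `{±1/√n}^n` and `y = f_A(x)`. -/
theorem stmt_3 (n N k : ℕ) (hn : 0 < n) (hk : 16 * k ≤ n) (B : ℝ) (hB : 0 ≤ B)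
    (Ψ : (Fin n → ℝ) → Fin N → ℝ) (hΨ : ∀ x i, Ψ x i ∈ Set.Icc (-1 : ℝ) 1) :
    ∃ A : Finset (Fin n), A.card = k ∧
      ∀ w : Fin N → ℝ, Real.sqrt (∑ i, (w i) ^ 2) ≤ B →
        1 - Real.sqrt (2 * N) * B / 2 ^ k ≤
          (1 / 2 ^ n : ℝ) * ∑ s : Fin n → Bool,
            max (1 - parity A s * ∑ i, Ψ (pt n s) i * w i) 0 := by
  classical
  set S : Finset (Finset (Fin n)) := Finset.univ.powersetCard k with hS
  set v : Finset (Fin n) → Fin N → ℝ :=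
    fun A i => (1 / 2 ^ n : ℝ) * ∑ s : Fin n → Bool, (∏ j ∈ A, sg (s j)) * Ψ (pt n s) i with hv
  have hcoord : ∀ i : Fin N, ∑ A ∈ S, (v A i) ^ 2 ≤ 1 := by
    intro i
    have hsub : ∑ A ∈ S, (v A i) ^ 2 ≤ ∑ A : Finset (Fin n), (v A i) ^ 2 :=
      Finset.sum_le_sum_of_subset_of_nonneg (Finset.subset_univ S)
        (fun _ _ _ => sq_nonneg _)
    have heq : ∑ A : Finset (Fin n), (v A i) ^ 2
        = (1 / 2 ^ n : ℝ) ^ 2 * (2 ^ n * ∑ s : Fin n → Bool, (Ψ (pt n s) i) ^ 2) := by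
      simp_rw [hv, mul_pow]
      rw [← Finset.mul_sum, sum_chi_sq n (fun s => Ψ (pt n s) i)]
    have hts : ∑ s : Fin n → Bool, (Ψ (pt n s) i) ^ 2 ≤ 2 ^ n := by
      calc ∑ s : Fin n → Bool, (Ψ (pt n s) i) ^ 2 ≤ ∑ _s : Fin n → Bool, (1:ℝ) := by
            refine Finset.sum_le_sum fun s _ => ?_
            have h := hΨ (pt n s) i
            nlinarith [h.1, h.2]
        _ = 2 ^ n := by simp [Finset.card_univ]
    calc ∑ A ∈ S, (v A i) ^ 2 ≤ (1 / 2 ^ n : ℝ) ^ 2 * (2 ^ n * ∑ s : Fin n → Bool, (Ψ (pt n s) i) ^ 2) := by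
          rw [← heq]; exact hsub
      _ ≤ (1 / 2 ^ n : ℝ) ^ 2 * (2 ^ n * 2 ^ n) := by
          refine mul_le_mul_of_nonneg_left (mul_le_mul_of_nonneg_left hts (by positivity)) (by positivity)
      _ = 1 := by field_simp
  have hsumbound : ∑ A ∈ S, (∑ i, (v A i) ^ 2) ≤ (N : ℝ) := by
    rw [Finset.sum_comm]
    calc ∑ i : Fin N, ∑ A ∈ S, (v A i) ^ 2 ≤ ∑ _i : Fin N, (1:ℝ) :=
          Finset.sum_le_sum fun i _ => hcoord i
      _ = N := by simp
  have hkn : k ≤ n := by omega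
  have hcpos : 0 < n.choose k := Nat.choose_pos hkn
  have hScard : S.card = n.choose k := by
    rw [hS, Finset.card_powersetCard, Finset.card_univ, Fintype.card_fin]
  have hSne : S.Nonempty := by
    rw [← Finset.card_pos, hScard]; exact hcpos
  obtain ⟨A, hAS, hA⟩ : ∃ A ∈ S, ∑ i, (v A i) ^ 2 ≤ (N : ℝ) / n.choose k := by
    apply Finset.exists_le_of_sum_le hSne
    rw [Finset.sum_const, hScard, nsmul_eq_mul]
    rw [mul_div_cancel₀]
    · exact hsumbound
    · exact_mod_cast hcpos.ne'
  have hAk : A.card = k := (Finset.mem_powersetCard.mp hAS).2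
  refine ⟨A, hAk, ?_⟩
  intro w hw
  have hw2 : ∑ i, (w i) ^ 2 ≤ B ^ 2 := by
    have h0 : (0:ℝ) ≤ ∑ i, (w i) ^ 2 := Finset.sum_nonneg fun i _ => sq_nonneg _
    calc ∑ i, (w i) ^ 2 = Real.sqrt (∑ i, (w i) ^ 2) ^ 2 := (Real.sq_sqrt h0).symm
      _ ≤ B ^ 2 := pow_le_pow_left₀ (Real.sqrt_nonneg _) hw 2
  have hFA : ∑ i, (v A i) ^ 2 ≤ 2 * N / 4 ^ k := by
    refine hA.trans ?_
    rw [div_le_div_iff₀ (by exact_mod_cast hcpos) (by positivity)]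
    have h4 : (4:ℝ) ^ k ≤ 2 * n.choose k := by exact_mod_cast choose_bound n k hk
    calc (N:ℝ) * 4 ^ k ≤ (N:ℝ) * (2 * n.choose k) :=
          mul_le_mul_of_nonneg_left h4 (Nat.cast_nonneg N)
      _ = 2 * N * n.choose k := by ring
  have hvw : ∑ i, v A i * w i ≤ Real.sqrt (2 * N) * B / 2 ^ k := by
    have hcs : (∑ i, v A i * w i) ^ 2 ≤ (2 * N / 4 ^ k) * B ^ 2 := by
      refine (Finset.sum_mul_sq_le_sq_mul_sq _ _ _).trans ?_
      refine mul_le_mul hFA hw2 (Finset.sum_nonneg fun i _ => sq_nonneg _) (by positivity)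
    have hrhs_nonneg : (0:ℝ) ≤ Real.sqrt (2 * N) * B / 2 ^ k := by positivity
    have h4 : (4:ℝ) ^ k = (2 ^ k) ^ 2 := by
      rw [show (4:ℝ) = 2 ^ 2 by norm_num, ← pow_mul, mul_comm 2 k, pow_mul]
    have hsq : (2 * (N:ℝ) / 4 ^ k) * B ^ 2 = (Real.sqrt (2 * N) * B / 2 ^ k) ^ 2 := by
      rw [div_pow, mul_pow, Real.sq_sqrt (by positivity), h4]
      ring
    calc ∑ i, v A i * w i ≤ |∑ i, v A i * w i| := le_abs_self _
      _ = Real.sqrt ((∑ i, v A i * w i) ^ 2) := (Real.sqrt_sq_eq_abs _).symm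
      _ ≤ Real.sqrt ((2 * N / 4 ^ k) * B ^ 2) := Real.sqrt_le_sqrt hcs
      _ = Real.sqrt ((Real.sqrt (2 * N) * B / 2 ^ k) ^ 2) := by rw [hsq]
      _ = Real.sqrt (2 * N) * B / 2 ^ k := Real.sqrt_sq hrhs_nonneg
  have hps : ∀ s : Fin n → Bool, parity A s = ∏ j ∈ A, sg (s j) := parity_eq hn A
  have step2 : (1 / 2 ^ n : ℝ) * ∑ s : Fin n → Bool,
      (1 - parity A s * ∑ i, Ψ (pt n s) i * w i) = 1 - ∑ i, v A i * w i := by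
    have h1 : ∑ s : Fin n → Bool, (1 - parity A s * ∑ i, Ψ (pt n s) i * w i)
        = 2 ^ n - ∑ i, (∑ s : Fin n → Bool, (∏ j ∈ A, sg (s j)) * Ψ (pt n s) i) * w i := by
      rw [Finset.sum_sub_distrib]
      congr 1
      · simp [Finset.card_univ]
      · simp_rw [hps, Finset.mul_sum]
        rw [Finset.sum_comm]
        refine Finset.sum_congr rfl fun i _ => ?_
        rw [Finset.sum_mul]
        exact Finset.sum_congr rfl fun s _ => by ring
    rw [h1, mul_sub]
    congr 1
    · field_simp
    · rw [Finset.mul_sum]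
      exact Finset.sum_congr rfl fun i _ => by rw [hv]; ring
  have step1 : (1 / 2 ^ n : ℝ) * ∑ s : Fin n → Bool,
      (1 - parity A s * ∑ i, Ψ (pt n s) i * w i)
      ≤ (1 / 2 ^ n : ℝ) * ∑ s : Fin n → Bool,
          max (1 - parity A s * ∑ i, Ψ (pt n s) i * w i) 0 :=
    mul_le_mul_of_nonneg_left (Finset.sum_le_sum fun s _ => le_max_left _ _) (by positivity)
  linarith [step1, step2, hvw]
end

section
/- Let k, n be odd with k ≤ n, let A = [k], and let f(x) = sign(∏_{i=1}^k x_i). Let D be the distribution on {±1/√n}^n where coordinates outside A are i.i.d. uniform on {±1/√n} and the coordinates in A are all equal to 1/√n with probability 1/2 and all equal to −1/√n with probability 1/2. Fix w ∈ {−1,0,1}^n with ∑_{i=1}^k w_i = 0 and b ∈ ℝ. Then for every j ∉ A, E_{x∼D}[x_j · f(x) · 1{⟨w,x⟩ + b > 0}] = 0, and also E_{x∼D}[f(x) · 1{⟨w,x⟩ + b > 0}] = 0. -/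
open Finset
open scoped BigOperators Classical

/-- A point of `{±1/√n}^n` sampled from `D_A^{(2)}` with `A = [k]`: the first `k`
coordinates are all `ε/√n`, the rest are given by the sign pattern `s`. -/
noncomputable def xA (n k : ℕ) (ε : Bool) (s : Fin n → Bool) : Fin n → ℝ :=
  fun j => (if (j : ℕ) < k then (if ε then 1 else -1) else (if s j then 1 else -1)) / Real.sqrt n

/-- For odd `k, n`, `A = [k]`, the biased distribution `D_A^{(2)}`, and `w ∈ {-1,0,1}^n`
with `∑_{i ∈ A} w_i = 0`: the correlations `E[x_j f(x) 1{⟨w,x⟩+b>0}]` for `j ∉ A` and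
`E[f(x) 1{⟨w,x⟩+b>0}]` both vanish. -/
theorem stmt_4 (n k : ℕ) (hn : Odd n) (hkodd : Odd k) (hkn : k ≤ n)
    (w : Fin n → ℝ) (hw : ∀ i, w i = -1 ∨ w i = 0 ∨ w i = 1)
    (hw0 : ∑ i ∈ Finset.univ.filter (fun i : Fin n => (i : ℕ) < k), w i = 0)
    (b : ℝ) :
    (∀ j : Fin n, ¬ (j : ℕ) < k →
      (1 / (2 * 2 ^ n) : ℝ) * ∑ ε : Bool, ∑ s : Fin n → Bool,
        xA n k ε s j *
          Real.sign (∏ i ∈ Finset.univ.filter (fun i : Fin n => (i : ℕ) < k), xA n k ε s i) *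
          (if 0 < (∑ i, w i * xA n k ε s i) + b then 1 else 0) = 0) ∧
    ((1 / (2 * 2 ^ n) : ℝ) * ∑ ε : Bool, ∑ s : Fin n → Bool,
        Real.sign (∏ i ∈ Finset.univ.filter (fun i : Fin n => (i : ℕ) < k), xA n k ε s i) *
          (if 0 < (∑ i, w i * xA n k ε s i) + b then 1 else 0) = 0) := by
  have hn0 : 0 < n := hn.pos
  have hs0 : (0:ℝ) < Real.sqrt n := Real.sqrt_pos.mpr (by exact_mod_cast hn0)
  set F : Finset (Fin n) := Finset.univ.filter (fun i : Fin n => (i : ℕ) < k) with hF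
  have hcard : F.card = k := by
    have : F = (Finset.range k).attachFin
        (fun m hm => lt_of_lt_of_le (Finset.mem_range.mp hm) hkn) := by
      ext i; simp [hF, Finset.mem_attachFin]
    rw [this, Finset.card_attachFin, Finset.card_range]
  have hprod : ∀ (ε : Bool) (s : Fin n → Bool),
      (∏ i ∈ F, xA n k ε s i) = ((if ε then (1:ℝ) else -1) / Real.sqrt n) ^ k := by
    intro ε s
    rw [show (∏ i ∈ F, xA n k ε s i)
        = ∏ _i ∈ F, ((if ε then (1:ℝ) else -1) / Real.sqrt n) from
      Finset.prod_congr rfl (by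
        intro i hi
        have : (i : ℕ) < k := (Finset.mem_filter.mp hi).2
        simp [xA, this]), Finset.prod_const, hcard]
  have hpos : (0:ℝ) < ((1:ℝ) / Real.sqrt n) ^ k := pow_pos (by positivity) k
  have hsignT : ∀ s, Real.sign (∏ i ∈ F, xA n k true s i) = 1 := by
    intro s; rw [hprod]; simp only [if_true]
    exact Real.sign_of_pos hpos
  have hsignF : ∀ s, Real.sign (∏ i ∈ F, xA n k false s i) = -1 := by
    intro s; rw [hprod]; norm_num
    have : ((-1 : ℝ) / Real.sqrt n) ^ k = -(((1:ℝ) / Real.sqrt n) ^ k) := by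
      rw [neg_div, Odd.neg_pow hkodd]
    rw [this]
    exact Real.sign_of_neg (by linarith)
  have hout : ∀ (s : Fin n → Bool) (j : Fin n), ¬ (j : ℕ) < k →
      xA n k true s j = xA n k false s j := by
    intro s j hj; unfold xA; rw [if_neg hj, if_neg hj]
  have hinner : ∀ s, (∑ i, w i * xA n k true s i) = ∑ i, w i * xA n k false s i := by
    intro s
    have hzero : ∀ ε : Bool, ∑ i ∈ F, w i * xA n k ε s i = 0 := by
      intro ε
      have : ∑ i ∈ F, w i * xA n k ε s i
          = ∑ i ∈ F, w i * ((if ε then (1:ℝ) else -1) / Real.sqrt n) := by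
        refine Finset.sum_congr rfl fun i hi => ?_
        have : (i : ℕ) < k := (Finset.mem_filter.mp hi).2
        simp [xA, this]
      rw [this, ← Finset.sum_mul, hF, hw0, zero_mul]
    rw [← Finset.sum_filter_add_sum_filter_not Finset.univ (fun i : Fin n => (i:ℕ) < k)
        (fun i => w i * xA n k true s i),
      ← Finset.sum_filter_add_sum_filter_not Finset.univ (fun i : Fin n => (i:ℕ) < k)
        (fun i => w i * xA n k false s i)]
    rw [show Finset.univ.filter (fun i : Fin n => (i:ℕ) < k) = F from rfl]
    rw [hzero true, hzero false]
    congr 1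
    refine Finset.sum_congr rfl fun i hi => ?_
    have hik : ¬ (i : ℕ) < k := by simpa using (Finset.mem_filter.mp hi).2
    rw [hout s i hik]
  constructor
  · intro j hj
    rw [Fintype.sum_bool, ← Finset.sum_add_distrib]
    have : ∀ s : Fin n → Bool,
        (xA n k true s j * Real.sign (∏ i ∈ F, xA n k true s i) *
          (if 0 < (∑ i, w i * xA n k true s i) + b then (1:ℝ) else 0)) +
        (xA n k false s j * Real.sign (∏ i ∈ F, xA n k false s i) *
          (if 0 < (∑ i, w i * xA n k false s i) + b then (1:ℝ) else 0)) = 0 := by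
      intro s
      rw [hsignT, hsignF, hout s j hj, hinner s]
      ring
    rw [Finset.sum_congr rfl (fun s _ => this s), Finset.sum_const, smul_zero, mul_zero]
  · rw [Fintype.sum_bool, ← Finset.sum_add_distrib]
    have : ∀ s : Fin n → Bool,
        (Real.sign (∏ i ∈ F, xA n k true s i) *
          (if 0 < (∑ i, w i * xA n k true s i) + b then (1:ℝ) else 0)) +
        (Real.sign (∏ i ∈ F, xA n k false s i) *
          (if 0 < (∑ i, w i * xA n k false s i) + b then (1:ℝ) else 0)) = 0 := by
      intro s
      rw [hsignT, hsignF, hinner s]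
      ring
    rw [Finset.sum_congr rfl (fun s _ => this s), Finset.sum_const, smul_zero, mul_zero]
end

section
/- Fix j ∉ A, b ∈ ℝ, and let D be the uniform distribution on {±1/√n}^n. Let f_A(x) = sign(∏_{i∈A} x_i) where |A| = k and j ∉ A. Let w be drawn uniformly from {−1,0,1}^n. Then for every c > 0, with probability at least 1 − 1/c over the choice of w, |E_{x∼D}[x_j f_A(x) · 1{⟨w,x⟩ + b > 0}]| ≤ c·√(1/C(n−1,k)). -/
open Finset
open scoped BigOperators Classical

/-- `±1` sign of a boolean. -/
noncomputable def sgn : Bool → ℝ := fun b => if b then 1 else -1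

/-- Fourier character on the Boolean cube. -/
noncomputable def chi {n : ℕ} (B : Finset (Fin n)) (s : Fin n → Bool) : ℝ :=
  ∏ i ∈ B, sgn (s i)

lemma sgn_sq (b : Bool) : sgn b * sgn b = 1 := by cases b <;> simp [sgn]

lemma chi_eq_one_or (B : Finset (Fin n)) (s : Fin n → Bool) :
    chi B s = 1 ∨ chi B s = -1 := by
  refine Finset.prod_induction _ (fun x => x = 1 ∨ x = -1) ?_ (Or.inl rfl) ?_
  · rintro x y (rfl | rfl) (rfl | rfl) <;> norm_num
  · intro i _; cases s i <;> simp [sgn]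

lemma chi_orth {n : ℕ} (s t : Fin n → Bool) :
    ∑ B ∈ (univ : Finset (Fin n)).powerset, chi B s * chi B t
      = if s = t then (2 : ℝ) ^ n else 0 := by
  have h1 : ∀ B ∈ (univ : Finset (Fin n)).powerset,
      chi B s * chi B t = (∏ i ∈ B, sgn (s i) * sgn (t i)) * ∏ i ∈ univ \ B, (1:ℝ) := by
    intro B _; simp [chi, Finset.prod_mul_distrib]
  rw [Finset.sum_congr rfl h1, ← Finset.prod_add]
  by_cases hst : s = t
  · subst hst
    simp only [if_pos rfl]
    have : ∀ i ∈ (univ : Finset (Fin n)), sgn (s i) * sgn (s i) + 1 = 2 := by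
      intro i _; rw [sgn_sq]; norm_num
    rw [Finset.prod_congr rfl this, Finset.prod_const, Finset.card_univ, Fintype.card_fin]
    simp
  · rw [if_neg hst]
    obtain ⟨i, hi⟩ : ∃ i, s i ≠ t i := by
      by_contra h; push_neg at h; exact hst (funext h)
    refine Finset.prod_eq_zero (Finset.mem_univ i) ?_
    cases hs : s i <;> cases ht : t i <;> simp_all [sgn]

lemma parseval {n : ℕ} (h : (Fin n → Bool) → ℝ) :
    ∑ B ∈ (univ : Finset (Fin n)).powerset,
        ((1 / 2 ^ n : ℝ) * ∑ s : Fin n → Bool, chi B s * h s) ^ 2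
      = (1 / 2 ^ n : ℝ) * ∑ s : Fin n → Bool, (h s) ^ 2 := by
  have key : ∑ B ∈ (univ : Finset (Fin n)).powerset,
      (∑ s : Fin n → Bool, chi B s * h s) ^ 2
      = (2:ℝ) ^ n * ∑ s : Fin n → Bool, (h s) ^ 2 := by
    have : ∀ B, (∑ s : Fin n → Bool, chi B s * h s) ^ 2
        = ∑ s : Fin n → Bool, ∑ t : Fin n → Bool,
            (h s * h t) * (chi B s * chi B t) := by
      intro B
      rw [sq, Finset.sum_mul_sum]
      exact Finset.sum_congr rfl fun s _ => Finset.sum_congr rfl fun t _ => by ring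
    rw [Finset.sum_congr rfl fun B _ => this B, Finset.sum_comm]
    have : ∀ s : Fin n → Bool,
        ∑ B ∈ (univ : Finset (Fin n)).powerset,
          ∑ t : Fin n → Bool, (h s * h t) * (chi B s * chi B t)
        = (2:ℝ) ^ n * (h s) ^ 2 := by
      intro s
      rw [Finset.sum_comm]
      have : ∀ t : Fin n → Bool,
          ∑ B ∈ (univ : Finset (Fin n)).powerset, (h s * h t) * (chi B s * chi B t)
          = (h s * h t) * (if s = t then (2:ℝ)^n else 0) := by
        intro t; rw [← Finset.mul_sum, chi_orth]
      rw [Finset.sum_congr rfl fun t _ => this t]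
      have : (∑ t : Fin n → Bool, (h s * h t) * (if s = t then (2:ℝ)^n else 0))
          = ∑ t : Fin n → Bool, (if s = t then h s * h t * (2:ℝ)^n else 0) := by
        refine Finset.sum_congr rfl fun t _ => ?_
        by_cases hst : s = t <;> simp [hst]
      rw [this, Finset.sum_ite_eq]
      simp [sq]; ring
    rw [Finset.sum_congr rfl fun s _ => this s, ← Finset.mul_sum]
  have h2 : ((2:ℝ) ^ n) ≠ 0 := by positivity
  calc ∑ B ∈ (univ : Finset (Fin n)).powerset,
        ((1 / 2 ^ n : ℝ) * ∑ s : Fin n → Bool, chi B s * h s) ^ 2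
      = (1/2^n:ℝ)^2 * ∑ B ∈ (univ : Finset (Fin n)).powerset,
          (∑ s : Fin n → Bool, chi B s * h s) ^ 2 := by
        rw [Finset.mul_sum]; exact Finset.sum_congr rfl fun B _ => by ring
    _ = (1 / 2 ^ n : ℝ) * ∑ s : Fin n → Bool, (h s) ^ 2 := by
        rw [key]; field_simp

/-- A permutation sending a finset to another finset of the same cardinality. -/
lemma exists_perm_image {α : Type*} [Fintype α] [DecidableEq α] (s t : Finset α)
    (h : s.card = t.card) : ∃ σ : Equiv.Perm α, s.image σ = t := by
  have e1 : {x // x ∈ s} ≃ {x // x ∈ t} := Finset.equivOfCardEq h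
  have hc : Fintype.card {x // ¬ x ∈ s} = Fintype.card {x // ¬ x ∈ t} := by
    simp only [Fintype.card_subtype_compl, Fintype.card_coe, h]
  have e2 : {x // ¬ x ∈ s} ≃ {x // ¬ x ∈ t} := Fintype.equivOfCardEq hc
  refine ⟨Equiv.subtypeCongr e1 e2, ?_⟩
  have hsub : s.image (Equiv.subtypeCongr e1 e2) ⊆ t := by
    intro y hy
    rcases Finset.mem_image.1 hy with ⟨x, hx, rfl⟩
    have : Equiv.subtypeCongr e1 e2 x = (e1 ⟨x, hx⟩ : α) := by
      simp [Equiv.subtypeCongr, hx]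
    rw [this]; exact (e1 ⟨x, hx⟩).2
  refine Finset.eq_of_subset_of_card_le hsub ?_
  rw [Finset.card_image_of_injective _ (Equiv.injective _), h]


/-- The indicator `1{⟨w-1, x(s)⟩ + b > 0}`. -/
noncomputable def Hfun (n : ℕ) (b : ℝ) (w : Fin n → Fin 3) (s : Fin n → Bool) : ℝ :=
  if 0 < (∑ i, ((w i : ℝ) - 1) * pt n s i) + b then 1 else 0

/-- Squared Fourier coefficient of the indicator. -/
noncomputable def Gfun (n : ℕ) (b : ℝ) (w : Fin n → Fin 3) (B : Finset (Fin n)) : ℝ :=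
  ((1 / 2 ^ n : ℝ) * ∑ s : Fin n → Bool, chi B s * Hfun n b w s) ^ 2

lemma Hfun_perm {n : ℕ} (b : ℝ) (σ : Equiv.Perm (Fin n)) (w : Fin n → Fin 3)
    (s : Fin n → Bool) :
    Hfun n b w (fun i => s (σ.symm i)) = Hfun n b (fun i => w (σ i)) s := by
  have key : (∑ i, ((w i : ℝ) - 1) * pt n (fun i' => s (σ.symm i')) i)
      = ∑ i, ((w (σ i) : ℝ) - 1) * pt n s i := by
    rw [← Equiv.sum_comp σ (fun i => ((w i : ℝ) - 1) * pt n (fun i' => s (σ.symm i')) i)]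
    exact Finset.sum_congr rfl fun i _ => by simp [pt]
  simp only [Hfun, key]

lemma chi_perm {n : ℕ} (σ : Equiv.Perm (Fin n)) (B : Finset (Fin n)) (s : Fin n → Bool) :
    chi (B.image σ) (fun i => s (σ.symm i)) = chi B s := by
  unfold chi
  rw [Finset.prod_image (fun a _ a' _ h => σ.injective h)]
  simp

lemma sum_G_perm {n : ℕ} (b : ℝ) (σ : Equiv.Perm (Fin n)) (B : Finset (Fin n)) :
    ∑ w : Fin n → Fin 3, Gfun n b w (B.image σ) = ∑ w : Fin n → Fin 3, Gfun n b w B := by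
  have hI : ∀ w : Fin n → Fin 3,
      Gfun n b w (B.image σ) = Gfun n b (fun i => w (σ i)) B := by
    intro w
    unfold Gfun
    congr 2
    refine (Fintype.sum_equiv (Equiv.piCongrLeft' (fun _ => Bool) σ) _ _ ?_).symm
    intro s
    show chi B s * Hfun n b (fun i => w (σ i)) s
        = chi (B.image σ) (fun i => s (σ.symm i)) * Hfun n b w (fun i => s (σ.symm i))
    rw [chi_perm σ B s, Hfun_perm b σ w s]
  rw [Finset.sum_congr rfl fun w _ => hI w]
  exact Fintype.sum_equiv (Equiv.piCongrLeft' (fun _ => Fin 3) σ.symm) _ _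
    (fun w => rfl)

lemma bessel {n : ℕ} (b : ℝ) (w : Fin n → Fin 3) (F : Finset (Finset (Fin n))) :
    ∑ B ∈ F, Gfun n b w B ≤ 1 := by
  have hsub : F ⊆ (univ : Finset (Fin n)).powerset :=
    fun B _ => Finset.mem_powerset.2 (Finset.subset_univ B)
  have h1 : ∑ B ∈ F, Gfun n b w B
      ≤ ∑ B ∈ (univ : Finset (Fin n)).powerset, Gfun n b w B :=
    Finset.sum_le_sum_of_subset_of_nonneg hsub (fun B _ _ => sq_nonneg _)
  refine h1.trans ?_
  have h2 := parseval (Hfun n b w)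
  unfold Gfun
  rw [h2]
  have h3 : ∑ s : Fin n → Bool, (Hfun n b w s) ^ 2 ≤ ∑ _s : Fin n → Bool, (1:ℝ) := by
    refine Finset.sum_le_sum fun s _ => ?_
    unfold Hfun; split <;> norm_num
  have h4 : (∑ _s : Fin n → Bool, (1:ℝ)) = 2 ^ n := by
    simp [Finset.card_univ]
  have h5 : (0:ℝ) < 2 ^ n := by positivity
  calc (1 / 2 ^ n : ℝ) * ∑ s : Fin n → Bool, (Hfun n b w s) ^ 2
      ≤ (1 / 2 ^ n : ℝ) * 2 ^ n := by
        rw [← h4]; exact mul_le_mul_of_nonneg_left h3 (by positivity)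
    _ = 1 := by field_simp


/-- For `w` uniform in `{-1,0,1}^n` (encoded as `Fin n → Fin 3` with value map `t ↦ t - 1`),
with probability at least `1 - 1/c`,
`|E_{x∼uniform}[x_j f_A(x) 1{⟨w,x⟩+b>0}]| ≤ c √(1/C(n-1,k))`. -/
theorem stmt_5 (n k : ℕ) (hn : 0 < n)
    (A : Finset (Fin n)) (hA : A.card = k) (j : Fin n) (hj : j ∉ A)
    (b c : ℝ) (hc : 0 < c) :
    (1 - 1 / c) * 3 ^ n ≤
      ((Finset.univ.filter (fun w : Fin n → Fin 3 =>
        |(1 / 2 ^ n : ℝ) * ∑ s : Fin n → Bool,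
            pt n s j * parity A s *
              (if 0 < (∑ i, ((w i : ℝ) - 1) * pt n s i) + b then 1 else 0)|
          ≤ c * Real.sqrt (1 / ((n - 1).choose k)))).card : ℝ) := by
  classical
  set C := (n - 1).choose k with hCdef
  set P : (Fin n → Fin 3) → Prop := fun w =>
    |(1 / 2 ^ n : ℝ) * ∑ s : Fin n → Bool,
        pt n s j * parity A s *
          (if 0 < (∑ i, ((w i : ℝ) - 1) * pt n s i) + b then 1 else 0)|
      ≤ c * Real.sqrt (1 / (C : ℝ)) with hP
  set good := Finset.univ.filter (fun w : Fin n → Fin 3 => P w) with hgood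
  set bad := Finset.univ.filter (fun w : Fin n → Fin 3 => ¬ P w) with hbad
  -- basic facts
  have hAsub : A ⊆ univ.erase j := fun i hi =>
    Finset.mem_erase.2 ⟨fun h => hj (h ▸ hi), Finset.mem_univ i⟩
  have hkle : k ≤ n - 1 := by
    have := Finset.card_le_card hAsub
    rwa [hA, Finset.card_erase_of_mem (Finset.mem_univ j), Finset.card_univ,
      Fintype.card_fin] at this
  have hC : 0 < C := Nat.choose_pos hkle
  have hCR : (0:ℝ) < C := by exact_mod_cast hC
  have hsqrt : (0:ℝ) < Real.sqrt n := Real.sqrt_pos.2 (by exact_mod_cast hn)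
  set B₀ : Finset (Fin n) := insert j A with hB₀
  -- parity is the character
  have hparity : ∀ s : Fin n → Bool, parity A s = chi A s := by
    intro s
    have hprod : ∏ i ∈ A, pt n s i = chi A s * ((Real.sqrt n)⁻¹) ^ k := by
      unfold chi
      calc ∏ i ∈ A, pt n s i = ∏ i ∈ A, (sgn (s i) * (Real.sqrt n)⁻¹) := by
            refine Finset.prod_congr rfl fun i _ => ?_
            simp [pt, sgn, div_eq_mul_inv]
        _ = (∏ i ∈ A, sgn (s i)) * ((Real.sqrt n)⁻¹) ^ k := by
            rw [Finset.prod_mul_distrib, Finset.prod_const, hA]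
    rw [parity, hprod]
    have hpos : (0:ℝ) < ((Real.sqrt n)⁻¹) ^ k := by positivity
    rcases chi_eq_one_or A s with h1 | h1 <;> rw [h1]
    · rw [one_mul, Real.sign_of_pos hpos]
    · rw [Real.sign_of_neg (by nlinarith)]
  -- rewriting the integrand
  have hint : ∀ w : Fin n → Fin 3,
      (∑ s : Fin n → Bool, pt n s j * parity A s *
        (if 0 < (∑ i, ((w i : ℝ) - 1) * pt n s i) + b then 1 else 0))
      = (Real.sqrt n)⁻¹ * ∑ s : Fin n → Bool, chi B₀ s * Hfun n b w s := by
    intro w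
    rw [Finset.mul_sum]
    refine Finset.sum_congr rfl fun s _ => ?_
    rw [hparity s]
    simp only [Hfun, hB₀, chi, Finset.prod_insert hj, pt, sgn]
    ring
  -- the family of size-(k+1) sets containing j
  set family := ((univ.erase j).powersetCard k).image (insert j) with hfamily
  have hjnot : ∀ B' ∈ (univ.erase j).powersetCard k, j ∉ B' := by
    intro B' hB' h
    exact (Finset.mem_erase.1 ((Finset.mem_powersetCard.1 hB').1 h)).1 rfl
  have hfcard : family.card = C := by
    rw [hfamily, Finset.card_image_of_injOn, Finset.card_powersetCard,
      Finset.card_erase_of_mem (Finset.mem_univ j), Finset.card_univ, Fintype.card_fin]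
    intro B hB B' hB' hins
    rw [← Finset.erase_insert (hjnot B hB), ← Finset.erase_insert (hjnot B' hB'), hins]
  have hB₀mem : B₀ ∈ family := by
    rw [hfamily]
    exact Finset.mem_image.2 ⟨A, Finset.mem_powersetCard.2 ⟨hAsub, hA⟩, rfl⟩
  set S := ∑ w : Fin n → Fin 3, Gfun n b w B₀ with hS
  have hSB : ∀ B ∈ family, (∑ w : Fin n → Fin 3, Gfun n b w B) = S := by
    intro B hB
    rw [hfamily] at hB
    obtain ⟨B', hB', rfl⟩ := Finset.mem_image.1 hB
    have hcard : B₀.card = (insert j B').card := by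
      rw [hB₀, Finset.card_insert_of_notMem hj, Finset.card_insert_of_notMem (hjnot B' hB'),
        hA, (Finset.mem_powersetCard.1 hB').2]
    obtain ⟨σ, hσ⟩ := exists_perm_image B₀ (insert j B') hcard
    rw [← hσ, sum_G_perm]
  have hcardW : ((univ : Finset (Fin n → Fin 3)).card : ℝ) = 3 ^ n := by
    rw [Finset.card_univ, Fintype.card_fun, Fintype.card_fin, Fintype.card_fin]
    push_cast; ring
  have hCS : (C:ℝ) * S ≤ 3 ^ n := by
    have h1 : ∑ B ∈ family, ∑ w : Fin n → Fin 3, Gfun n b w B = (C:ℝ) * S := by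
      rw [Finset.sum_congr rfl hSB, Finset.sum_const, hfcard, nsmul_eq_mul]
    rw [← h1, Finset.sum_comm]
    calc ∑ w : Fin n → Fin 3, ∑ B ∈ family, Gfun n b w B
        ≤ ∑ _w : Fin n → Fin 3, (1:ℝ) := Finset.sum_le_sum (fun w _ => bessel b w family)
      _ = 3 ^ n := by rw [Finset.sum_const, nsmul_eq_mul, mul_one, hcardW]
  -- pointwise bound on bad w
  have hpoint : ∀ w : Fin n → Fin 3, ¬ P w → c ^ 2 * (1 / (C:ℝ)) ≤ Gfun n b w B₀ := by
    intro w hw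
    rw [hP] at hw
    have hlt := not_le.1 hw
    rw [hint w] at hlt
    have habs : |(1 / 2 ^ n : ℝ) * ((Real.sqrt n)⁻¹ *
        ∑ s : Fin n → Bool, chi B₀ s * Hfun n b w s)|
        ≤ |(1 / 2 ^ n : ℝ) * ∑ s : Fin n → Bool, chi B₀ s * Hfun n b w s| := by
      have hle1 : (Real.sqrt n)⁻¹ ≤ 1 := by
        rw [inv_le_one_iff₀]
        right
        rw [Real.one_le_sqrt]
        · exact_mod_cast hn
      calc |(1 / 2 ^ n : ℝ) * ((Real.sqrt n)⁻¹ *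
            ∑ s : Fin n → Bool, chi B₀ s * Hfun n b w s)|
          = (Real.sqrt n)⁻¹ *
            |(1 / 2 ^ n : ℝ) * ∑ s : Fin n → Bool, chi B₀ s * Hfun n b w s| := by
            rw [abs_mul, abs_mul, abs_mul]
            rw [abs_of_nonneg (by positivity : (0:ℝ) ≤ (Real.sqrt n)⁻¹)]
            ring
        _ ≤ 1 * |(1 / 2 ^ n : ℝ) * ∑ s : Fin n → Bool, chi B₀ s * Hfun n b w s| :=
            mul_le_mul_of_nonneg_right hle1 (abs_nonneg _)
        _ = _ := one_mul _
    have hlt2 : c * Real.sqrt (1 / (C:ℝ))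
        < |(1 / 2 ^ n : ℝ) * ∑ s : Fin n → Bool, chi B₀ s * Hfun n b w s| :=
      lt_of_lt_of_le hlt habs
    have hTnn : 0 ≤ c * Real.sqrt (1 / (C:ℝ)) := by positivity
    have hsq := pow_le_pow_left₀ hTnn hlt2.le 2
    calc c ^ 2 * (1 / (C:ℝ)) = (c * Real.sqrt (1 / (C:ℝ))) ^ 2 := by
          rw [mul_pow, Real.sq_sqrt (by positivity : (0:ℝ) ≤ 1 / (C:ℝ))]
      _ ≤ |(1 / 2 ^ n : ℝ) * ∑ s : Fin n → Bool, chi B₀ s * Hfun n b w s| ^ 2 := hsq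
      _ = Gfun n b w B₀ := by rw [sq_abs]; rfl
  -- Markov
  have hmark : (bad.card : ℝ) * (c ^ 2 * (1 / (C:ℝ))) ≤ S := by
    calc (bad.card : ℝ) * (c ^ 2 * (1 / (C:ℝ)))
        = ∑ _w ∈ bad, c ^ 2 * (1 / (C:ℝ)) := by rw [Finset.sum_const, nsmul_eq_mul]
      _ ≤ ∑ w ∈ bad, Gfun n b w B₀ :=
          Finset.sum_le_sum fun w hw => hpoint w (Finset.mem_filter.1 hw).2
      _ ≤ S := Finset.sum_le_sum_of_subset_of_nonneg (Finset.subset_univ _)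
          (fun w _ _ => sq_nonneg _)
  have hbadle : (bad.card : ℝ) * c ^ 2 ≤ 3 ^ n := by
    have hS3 : S ≤ 3 ^ n / (C:ℝ) := by
      rw [le_div_iff₀ hCR]
      calc S * (C:ℝ) = (C:ℝ) * S := mul_comm _ _
        _ ≤ 3 ^ n := hCS
    have h := hmark.trans hS3
    calc (bad.card : ℝ) * c ^ 2
        = ((bad.card : ℝ) * (c ^ 2 * (1 / (C:ℝ)))) * C := by field_simp
      _ ≤ (3 ^ n / (C:ℝ)) * C := mul_le_mul_of_nonneg_right h hCR.le
      _ = 3 ^ n := by field_simp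
  have hsplit : (good.card : ℝ) + bad.card = 3 ^ n := by
    rw [hgood, hbad, ← hcardW]
    exact_mod_cast congrArg Nat.cast
      (Finset.card_filter_add_card_filter_not (s := univ) (p := P))
  have hgoodnn : (0:ℝ) ≤ (good.card : ℝ) := Nat.cast_nonneg _
  have hbadnn : (0:ℝ) ≤ (bad.card : ℝ) := Nat.cast_nonneg _
  rcases le_or_gt 1 c with hc1 | hc1
  · have h1 : (bad.card : ℝ) ≤ 3 ^ n / c ^ 2 := by
      rw [le_div_iff₀ (by positivity)]
      exact hbadle
    have h2 : (3:ℝ) ^ n / c ^ 2 ≤ 3 ^ n / c := by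
      rw [div_le_div_iff₀ (by positivity) hc]
      nlinarith [mul_nonneg (mul_nonneg (pow_nonneg (by norm_num : (0:ℝ) ≤ 3) n)
        (sub_nonneg.2 hc1)) hc.le]
    have h3 : (1 - 1 / c) * 3 ^ n = 3 ^ n - 3 ^ n / c := by
      field_simp
    linarith
  · have h4 : (1:ℝ) < 1 / c := one_lt_one_div hc hc1
    have h5 : (1 - 1 / c) * (3:ℝ) ^ n ≤ 0 :=
      mul_nonpos_of_nonpos_of_nonneg (by linarith) (by positivity)
    exact h5.trans hgoodnn
end

section
/- Let S = ∑_{j∈J} w_j x_j where w_j ∈ {−1,1} and x_j are i.i.d. uniform on {±1/√n}. Then for every open interval I ⊆ ℝ of length 1/√n, P(S ∈ I) ≤ B/√|J| for a universal constant B, and consequently P(S + b ∈ (−k/√n, k/√n] ∪ [6 − k/√n, 6)) ≤ B(3k+2)/√|J| for any b ∈ ℝ and positive integer k. -/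
open Finset
open scoped BigOperators Classical

lemma cb_sq (n : ℕ) : ((Nat.centralBinom n : ℝ))^2 * (n+1) ≤ 16^n := by
  induction n with
  | zero => norm_num [Nat.centralBinom]
  | succ n ih =>
    have h := Nat.succ_mul_centralBinom_succ n
    have e1 : ((n:ℝ)+1) * (Nat.centralBinom (n+1) : ℝ)
        = 2 * (2*(n:ℝ)+1) * (Nat.centralBinom n : ℝ) := by exact_mod_cast h
    have hN : (0:ℝ) ≤ (n:ℝ) := Nat.cast_nonneg n
    have h16 : (0:ℝ) < 16^n := by positivity
    have key : ((2*(n:ℝ)+1))^2 * ((n:ℝ)+2) ≤ 4 * ((n:ℝ)+1)^3 := by nlinarith [hN]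
    set N := (n:ℝ)
    set c0 := (Nat.centralBinom n : ℝ)
    set c1 := (Nat.centralBinom (n+1) : ℝ)
    have step1 : 4*(2*N+1)^2*(N+2)*(c0^2*(N+1)) ≤ 4*(2*N+1)^2*(N+2)*16^n :=
      mul_le_mul_of_nonneg_left ih (by positivity)
    have big : (N+1)^3*(c1^2*(N+2)) ≤ (N+1)^3*(16^(n+1)) := by
      calc (N+1)^3*(c1^2*(N+2)) = 4*(2*N+1)^2*(N+2)*(c0^2*(N+1)) := by
            linear_combination ((N+1)*(N+2)*((N+1)*c1 + 2*(2*N+1)*c0)) * e1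
        _ ≤ 4*(2*N+1)^2*(N+2)*16^n := step1
        _ = ((2*N+1)^2*(N+2))*(4*16^n) := by ring
        _ ≤ (4*(N+1)^3)*(4*16^n) := mul_le_mul_of_nonneg_right key (by positivity)
        _ = (N+1)^3*(16^(n+1)) := by rw [pow_succ]; ring
    have hpos : (0:ℝ) < (N+1)^3 := by positivity
    have goal' : c1^2*(N+2) ≤ 16^(n+1) := le_of_mul_le_mul_left big hpos
    have : ((n:ℝ)+1+1) = N+2 := by push_cast; ring
    push_cast
    linarith [goal']

lemma cb_sqrt (n : ℕ) : (Nat.centralBinom n : ℝ) * Real.sqrt (n+1) ≤ 4^n := by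
  have hsq : (Real.sqrt ((n:ℝ)+1))^2 = (n:ℝ)+1 := Real.sq_sqrt (by positivity)
  have h1 : ((Nat.centralBinom n : ℝ) * Real.sqrt (n+1))^2 ≤ (4^n)^2 := by
    calc ((Nat.centralBinom n : ℝ) * Real.sqrt (n+1))^2
        = (Nat.centralBinom n : ℝ)^2 * ((n:ℝ)+1) := by rw [mul_pow, hsq]
      _ ≤ 16^n := cb_sq n
      _ = (4^n)^2 := by rw [← pow_mul, mul_comm, pow_mul]; norm_num
  have h2 : (0:ℝ) ≤ (Nat.centralBinom n : ℝ) * Real.sqrt (n+1) := by positivity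
  have := Real.sqrt_le_sqrt h1
  rwa [Real.sqrt_sq h2, Real.sqrt_sq (by positivity : (0:ℝ) ≤ 4^n)] at this

lemma choose_bound_s6 (m k : ℕ) (hm : 0 < m) :
    (m.choose k : ℝ) * Real.sqrt m ≤ Real.sqrt 2 * 2^m := by
  have hmid : (m.choose k : ℝ) ≤ (m.choose (m/2) : ℝ) := by
    exact_mod_cast Nat.choose_le_middle k m
  have hs : (0:ℝ) ≤ Real.sqrt m := Real.sqrt_nonneg _
  refine le_trans (mul_le_mul_of_nonneg_right hmid hs) ?_
  obtain ⟨n, hn | hn⟩ := Nat.even_or_odd' m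
  · -- m = 2n
    subst hn
    have h1 : (2*n)/2 = n := by omega
    rw [h1, ← Nat.centralBinom]
    have hle : Real.sqrt (2*n : ℕ) ≤ Real.sqrt 2 * Real.sqrt ((n:ℝ)+1) := by
      rw [← Real.sqrt_mul (by norm_num)]
      apply Real.sqrt_le_sqrt
      push_cast; linarith
    calc (Nat.centralBinom n : ℝ) * Real.sqrt ((2*n : ℕ) : ℝ)
        ≤ (Nat.centralBinom n : ℝ) * (Real.sqrt 2 * Real.sqrt ((n:ℝ)+1)) := by
          apply mul_le_mul_of_nonneg_left hle (by positivity)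
      _ = Real.sqrt 2 * ((Nat.centralBinom n : ℝ) * Real.sqrt ((n:ℝ)+1)) := by ring
      _ ≤ Real.sqrt 2 * 4^n := by
          apply mul_le_mul_of_nonneg_left (cb_sqrt n) (by positivity)
      _ = Real.sqrt 2 * 2^(2*n) := by rw [pow_mul]; norm_num
  · -- m = 2n+1
    subst hn
    have h1 : (2*n+1)/2 = n := by omega
    rw [h1]
    have hch : ((2*n+1).choose n : ℝ) ≤ 2 * (Nat.centralBinom n : ℝ) := by
      have hsymm : (2*n+1).choose n = (2*n+1).choose (n+1) := by
        have := Nat.choose_symm (show n ≤ 2*n+1 by omega)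
        simpa [show 2*n+1-n = n+1 by omega] using this.symm
      have hid : (2*n+1) * (2*n).choose n = (2*n+1).choose (n+1) * (n+1) :=
        Nat.add_one_mul_choose_eq (2*n) n
      have : (n+1) * (2*n+1).choose n ≤ (n+1) * (2 * Nat.centralBinom n) := by
        rw [hsymm]
        calc (n+1) * (2*n+1).choose (n+1) = (2*n+1) * (2*n).choose n := by
              rw [hid]; ring
          _ ≤ (2*n+2) * Nat.centralBinom n := by
              rw [Nat.centralBinom]; exact Nat.mul_le_mul_right _ (by omega)
          _ = (n+1) * (2 * Nat.centralBinom n) := by ring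
      have := Nat.le_of_mul_le_mul_left this (by omega)
      exact_mod_cast this
    have hle : Real.sqrt ((2*n+1 : ℕ) : ℝ) ≤ Real.sqrt 2 * Real.sqrt ((n:ℝ)+1) := by
      rw [← Real.sqrt_mul (by norm_num)]
      apply Real.sqrt_le_sqrt
      push_cast; linarith
    calc ((2*n+1).choose n : ℝ) * Real.sqrt ((2*n+1 : ℕ) : ℝ)
        ≤ (2 * (Nat.centralBinom n : ℝ)) * (Real.sqrt 2 * Real.sqrt ((n:ℝ)+1)) := by
          apply mul_le_mul hch hle (Real.sqrt_nonneg _) (by positivity)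
      _ = Real.sqrt 2 * (2 * ((Nat.centralBinom n : ℝ) * Real.sqrt ((n:ℝ)+1))) := by ring
      _ ≤ Real.sqrt 2 * (2 * 4^n) := by
          apply mul_le_mul_of_nonneg_left _ (Real.sqrt_nonneg 2)
          apply mul_le_mul_of_nonneg_left (cb_sqrt n) (by norm_num)
      _ = Real.sqrt 2 * 2^(2*n+1) := by rw [pow_succ, pow_mul]; ring_nf

lemma interval_bound (n m : ℕ) (hn : 0 < n) (hm : 0 < m) (w : Fin m → ℝ)
    (hw : ∀ j, w j = 1 ∨ w j = -1) (u : ℝ) :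
    ((Finset.univ.filter (fun x : Fin m → Bool =>
        (∑ j, w j * ((if x j then 1 else -1) / Real.sqrt n)) ∈
          Set.Ioo u (u + 2 / Real.sqrt n))).card : ℝ) * Real.sqrt m ≤ Real.sqrt 2 * 2^m := by
  have hsn : (0:ℝ) < Real.sqrt n := Real.sqrt_pos.mpr (by exact_mod_cast hn)
  set S : (Fin m → Bool) → ℝ := fun x => ∑ j, w j * (if x j then 1 else -1) with hS
  have hSdiv : ∀ x : Fin m → Bool,
      (∑ j, w j * ((if x j then (1:ℝ) else -1) / Real.sqrt n)) = S x / Real.sqrt n := by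
    intro x
    show _ = (∑ j, w j * (if x j then (1:ℝ) else -1)) / Real.sqrt n
    rw [Finset.sum_div]
    exact Finset.sum_congr rfl fun j _ => (mul_div_assoc _ _ _).symm
  set g : (Fin m → Bool) → ℕ := fun x =>
    (Finset.univ.filter (fun j => w j * (if x j then (1:ℝ) else -1) = 1)).card with hg
  have sumeq : ∀ x : Fin m → Bool, S x = 2 * (g x : ℝ) - m := by
    intro x
    set A := Finset.univ.filter (fun j => w j * (if x j then (1:ℝ) else -1) = 1) with hA
    set A' := Finset.univ.filter (fun j => ¬ (w j * (if x j then (1:ℝ) else -1) = 1)) with hA'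
    have hterm2 : ∀ j ∈ A', w j * (if x j then (1:ℝ) else -1) = -1 := by
      intro j hj
      have hne := (Finset.mem_filter.mp hj).2
      rcases hw j with h | h <;> cases hxj : x j <;>
        simp_all
    have h1 : ∑ j ∈ A, w j * (if x j then (1:ℝ) else -1) = (A.card : ℝ) := by
      rw [Finset.sum_congr rfl (fun j hj => (Finset.mem_filter.mp hj).2)]
      rw [Finset.sum_const, nsmul_eq_mul, mul_one]
    have h2 : ∑ j ∈ A', w j * (if x j then (1:ℝ) else -1) = -(A'.card : ℝ) := by
      rw [Finset.sum_congr rfl hterm2]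
      rw [Finset.sum_const, nsmul_eq_mul, mul_neg_one]
    have hsplit := Finset.sum_filter_add_sum_filter_not Finset.univ
      (fun j => w j * (if x j then (1:ℝ) else -1) = 1)
      (fun j => w j * (if x j then (1:ℝ) else -1))
    have hcardN : A.card + A'.card = m := by
      have h := Finset.card_filter_add_card_filter_not
        (s := (Finset.univ : Finset (Fin m)))
        (p := fun j => w j * (if x j then (1:ℝ) else -1) = 1)
      rwa [Finset.card_univ, Fintype.card_fin] at h
    have hcR : (A.card : ℝ) + (A'.card : ℝ) = m := by exact_mod_cast hcardN
    show (∑ j, w j * (if x j then (1:ℝ) else -1)) = 2 * (A.card : ℝ) - m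
    rw [← hsplit, h1, h2]
    linarith
  set T := Finset.univ.filter (fun x : Fin m → Bool =>
      (∑ j, w j * ((if x j then 1 else -1) / Real.sqrt n)) ∈
        Set.Ioo u (u + 2 / Real.sqrt n)) with hT
  by_cases hTe : T = ∅
  · rw [hTe]; simp only [Finset.card_empty, Nat.cast_zero, zero_mul]; positivity
  · obtain ⟨x₀, hx₀⟩ := Finset.nonempty_iff_ne_empty.mpr hTe
    have hcancel : Real.sqrt n * (2 / Real.sqrt n) = 2 := by field_simp
    have hgconst : ∀ x ∈ T, g x = g x₀ := by
      intro x hx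
      have hmem : ∀ y ∈ T, u < S y / Real.sqrt n ∧ S y / Real.sqrt n < u + 2 / Real.sqrt n := by
        intro y hy
        have h := (Finset.mem_filter.mp hy).2
        rw [hSdiv y] at h
        exact ⟨h.1, h.2⟩
      obtain ⟨hx1, hx2⟩ := hmem x hx
      obtain ⟨h01, h02⟩ := hmem x₀ hx₀
      have hd1 : S x - S x₀ < 2 := by
        have h : S x / Real.sqrt n - S x₀ / Real.sqrt n < 2 / Real.sqrt n := by linarith
        have h3 := mul_lt_mul_of_pos_left h hsn
        rw [mul_sub, mul_div_cancel₀ _ (ne_of_gt hsn), mul_div_cancel₀ _ (ne_of_gt hsn)] at h3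
        linarith [hcancel]
      have hd2 : S x₀ - S x < 2 := by
        have h : S x₀ / Real.sqrt n - S x / Real.sqrt n < 2 / Real.sqrt n := by linarith
        have h3 := mul_lt_mul_of_pos_left h hsn
        rw [mul_sub, mul_div_cancel₀ _ (ne_of_gt hsn), mul_div_cancel₀ _ (ne_of_gt hsn)] at h3
        linarith [hcancel]
      rw [sumeq x, sumeq x₀] at hd1 hd2
      have f1 : (g x : ℤ) - (g x₀ : ℤ) < 1 := by
        have : ((g x : ℤ) - (g x₀ : ℤ) : ℝ) < 1 := by push_cast; linarith
        exact_mod_cast this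
      have f2 : (g x₀ : ℤ) - (g x : ℤ) < 1 := by
        have : ((g x₀ : ℤ) - (g x : ℤ) : ℝ) < 1 := by push_cast; linarith
        exact_mod_cast this
      omega
    set i : (Fin m → Bool) → Finset (Fin m) := fun x =>
      Finset.univ.filter (fun j => w j * (if x j then (1:ℝ) else -1) = 1) with hi
    have hmaps : ∀ x ∈ T, i x ∈ Finset.powersetCard (g x₀) (Finset.univ : Finset (Fin m)) := by
      intro x hx
      rw [Finset.mem_powersetCard]
      exact ⟨Finset.filter_subset _ _, hgconst x hx⟩
    have hinj : Set.InjOn i T := by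
      intro x _ y _ hxy
      funext j
      have hj := Finset.ext_iff.mp hxy j
      simp only [hi, Finset.mem_filter, Finset.mem_univ, true_and] at hj
      rcases hw j with h | h <;> cases hxj : x j <;> cases hyj : y j <;>
        simp [h, hxj, hyj] at hj ⊢ <;> norm_num at hj
    have hcard : T.card ≤ m.choose (g x₀) := by
      have := Finset.card_le_card_of_injOn i hmaps hinj
      rwa [Finset.card_powersetCard, Finset.card_univ, Fintype.card_fin] at this
    calc (T.card : ℝ) * Real.sqrt m ≤ (m.choose (g x₀) : ℝ) * Real.sqrt m := by
          apply mul_le_mul_of_nonneg_right _ (Real.sqrt_nonneg _)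
          exact_mod_cast hcard
      _ ≤ Real.sqrt 2 * 2^m := choose_bound_s6 m (g x₀) hm

lemma cover_step (c : ℝ) (hc : 0 < c) (K : ℕ) (u p : ℝ)
    (h1 : u < p) (h2 : p ≤ u + K * c) :
    ∃ i : ℕ, i < K ∧ u + i * c < p ∧ p < u + i * c + 2 * c := by
  set q := p - u with hq
  have hq0 : 0 < q := by simp [hq]; linarith
  have hqK : q ≤ K * c := by simp [hq]; linarith
  set z := ⌈q / c⌉ with hz
  have hz1 : 0 < z := Int.lt_ceil.mpr (by push_cast; positivity)
  have hz2 : z ≤ K := Int.ceil_le.mpr (by push_cast; rw [div_le_iff₀ hc]; linarith)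
  have hcast : (((z - 1).toNat : ℕ) : ℝ) = (z : ℝ) - 1 := by
    have := Int.toNat_of_nonneg (show (0:ℤ) ≤ z - 1 by omega)
    exact_mod_cast congrArg (Int.cast : ℤ → ℝ) this
  refine ⟨(z - 1).toNat, by omega, ?_, ?_⟩
  · have h3 : ((z : ℝ) - 1) < q / c := by
      have := Int.ceil_lt_add_one (q / c)
      rw [← hz] at this; linarith
    have h4 := mul_lt_mul_of_pos_right h3 hc
    rw [div_mul_cancel₀ _ hc.ne'] at h4
    rw [hcast]; linarith
  · have h5 : q / c ≤ (z : ℝ) := Int.le_ceil (q / c)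
    have h6 := mul_le_mul_of_nonneg_right h5 hc.le
    rw [div_mul_cancel₀ _ hc.ne'] at h6
    rw [hcast]; linarith

/-- Littlewood–Offord anti-concentration: for `S = ∑_{j∈J} w_j x_j` with `w_j ∈ {±1}` and
`x_j` i.i.d. uniform on `{±1/√n}`, any open interval of length `1/√n` has probability at most
`B/√|J|`, and the union of boundary intervals has probability at most `B(3k+2)/√|J|`. -/
theorem stmt_6 :
    ∃ B : ℝ, 0 < B ∧
      ∀ (n m k : ℕ), 0 < n → 0 < m → 0 < k →
        ∀ (w : Fin m → ℝ), (∀ j, w j = 1 ∨ w j = -1) →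
          ∀ (a b : ℝ),
            (((Finset.univ.filter (fun x : Fin m → Bool =>
                (∑ j, w j * ((if x j then 1 else -1) / Real.sqrt n)) ∈
                  Set.Ioo a (a + 1 / Real.sqrt n))).card : ℝ) / 2 ^ m
              ≤ B / Real.sqrt m) ∧
            (((Finset.univ.filter (fun x : Fin m → Bool =>
                (∑ j, w j * ((if x j then 1 else -1) / Real.sqrt n)) + b ∈
                  Set.Ioc (-(k / Real.sqrt n)) (k / Real.sqrt n) ∪
                    Set.Ico (6 - k / Real.sqrt n) 6)).card : ℝ) / 2 ^ m
              ≤ B * (3 * k + 2) / Real.sqrt m) := by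
  refine ⟨Real.sqrt 2, Real.sqrt_pos.mpr (by norm_num), ?_⟩
  intro n m k hn hm hk w hw a b
  have hsn : (0:ℝ) < Real.sqrt n := Real.sqrt_pos.mpr (by exact_mod_cast hn)
  have hsm : (0:ℝ) < Real.sqrt m := Real.sqrt_pos.mpr (by exact_mod_cast hm)
  have h2m : (0:ℝ) < 2 ^ m := by positivity
  constructor
  · rw [div_le_div_iff₀ h2m hsm]
    refine le_trans (mul_le_mul_of_nonneg_right ?_ hsm.le) (interval_bound n m hn hm w hw a)
    have hsub : (Finset.univ.filter (fun x : Fin m → Bool =>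
        (∑ j, w j * ((if x j then 1 else -1) / Real.sqrt n)) ∈
          Set.Ioo a (a + 1 / Real.sqrt n))) ⊆
        (Finset.univ.filter (fun x : Fin m → Bool =>
        (∑ j, w j * ((if x j then 1 else -1) / Real.sqrt n)) ∈
          Set.Ioo a (a + 2 / Real.sqrt n))) := by
      intro x hx
      rw [Finset.mem_filter] at hx ⊢
      obtain ⟨hx0, hx1, hx2⟩ := hx
      refine ⟨hx0, hx1, ?_⟩
      have h12 : 1 / Real.sqrt n ≤ 2 / Real.sqrt n := by
        gcongr
        norm_num
      linarith
    exact_mod_cast Finset.card_le_card hsub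
  · rw [div_le_div_iff₀ h2m hsm]
    set ℓ : ℝ := 1 / Real.sqrt n with hℓ
    have hℓpos : 0 < ℓ := by positivity
    set a' : ℕ → ℝ := fun i =>
      if i < 2*k then (-((k:ℝ) / Real.sqrt n) - b) + i * ℓ
      else (6 - b) - (((i - 2*k : ℕ) : ℝ) + 2) * ℓ with ha'
    have h2ℓ : 2 / Real.sqrt n = 2 * ℓ := by rw [hℓ]; ring
    set T := Finset.univ.filter (fun x : Fin m → Bool =>
        (∑ j, w j * ((if x j then 1 else -1) / Real.sqrt n)) + b ∈
          Set.Ioc (-((k:ℝ) / Real.sqrt n)) ((k:ℝ) / Real.sqrt n) ∪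
            Set.Ico (6 - (k:ℝ) / Real.sqrt n) 6) with hT
    have cover : T ⊆ (Finset.range (3*k)).biUnion (fun i =>
        Finset.univ.filter (fun x : Fin m → Bool =>
          (∑ j, w j * ((if x j then 1 else -1) / Real.sqrt n)) ∈
            Set.Ioo (a' i) (a' i + 2 / Real.sqrt n))) := by
      intro x hx
      have hx2 := (Finset.mem_filter.mp hx).2
      set Sx := ∑ j, w j * ((if x j then (1:ℝ) else -1) / Real.sqrt n) with hSx
      rw [Finset.mem_biUnion]
      rcases hx2 with h | h
      · -- Ioc case
        obtain ⟨hl, hr⟩ := h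
        have hkn : (k:ℝ) / Real.sqrt n = (k:ℝ) * ℓ := by rw [hℓ]; ring
        obtain ⟨i, hiK, hlo, hhi⟩ := cover_step ℓ hℓpos (2*k)
          (-((k:ℝ) / Real.sqrt n) - b) Sx (by linarith)
          (by push_cast; rw [hkn] at hr ⊢; linarith)
        refine ⟨i, Finset.mem_range.mpr (by omega), Finset.mem_filter.mpr ⟨Finset.mem_univ _, ?_⟩⟩
        have hai : a' i = (-((k:ℝ) / Real.sqrt n) - b) + i * ℓ := by
          rw [ha']; simp [hiK]
        rw [hai, h2ℓ]
        exact ⟨by linarith, by linarith⟩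
      · -- Ico case
        obtain ⟨hl, hr⟩ := h
        obtain ⟨j, hjK, hlo, hhi⟩ := cover_step ℓ hℓpos k (b - 6) (-Sx)
          (by linarith)
          (by
            have hkn : (k:ℝ) / Real.sqrt n = (k:ℝ) * ℓ := by rw [hℓ]; ring
            rw [hkn] at hl; linarith)
        refine ⟨2*k + j, Finset.mem_range.mpr (by omega),
          Finset.mem_filter.mpr ⟨Finset.mem_univ _, ?_⟩⟩
        have hai : a' (2*k + j) = (6 - b) - ((j:ℝ) + 2) * ℓ := by
          rw [ha']
          simp only [show ¬ (2*k + j < 2*k) by omega, if_false]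
          congr 2
          norm_cast
          omega
        rw [hai, h2ℓ]
        constructor
        · linarith
        · linarith
    have hcardsum : (T.card : ℝ) ≤ ∑ i ∈ Finset.range (3*k),
        ((Finset.univ.filter (fun x : Fin m → Bool =>
          (∑ j, w j * ((if x j then 1 else -1) / Real.sqrt n)) ∈
            Set.Ioo (a' i) (a' i + 2 / Real.sqrt n))).card : ℝ) := by
      have h1 := Finset.card_le_card cover
      have h2 := Finset.card_biUnion_le (s := Finset.range (3*k)) (t := fun i =>
        Finset.univ.filter (fun x : Fin m → Bool =>
          (∑ j, w j * ((if x j then 1 else -1) / Real.sqrt n)) ∈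
            Set.Ioo (a' i) (a' i + 2 / Real.sqrt n)))
      exact_mod_cast le_trans h1 h2
    calc (T.card : ℝ) * Real.sqrt m
        ≤ (∑ i ∈ Finset.range (3*k),
            ((Finset.univ.filter (fun x : Fin m → Bool =>
              (∑ j, w j * ((if x j then 1 else -1) / Real.sqrt n)) ∈
                Set.Ioo (a' i) (a' i + 2 / Real.sqrt n))).card : ℝ)) * Real.sqrt m :=
          mul_le_mul_of_nonneg_right hcardsum hsm.le
      _ = ∑ i ∈ Finset.range (3*k),
            ((Finset.univ.filter (fun x : Fin m → Bool =>
              (∑ j, w j * ((if x j then 1 else -1) / Real.sqrt n)) ∈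
                Set.Ioo (a' i) (a' i + 2 / Real.sqrt n))).card : ℝ) * Real.sqrt m := by
          rw [Finset.sum_mul]
      _ ≤ ∑ i ∈ Finset.range (3*k), Real.sqrt 2 * 2^m :=
          Finset.sum_le_sum (fun i _ => interval_bound n m hn hm w hw (a' i))
      _ = (3*k : ℕ) * (Real.sqrt 2 * 2^m) := by
          rw [Finset.sum_const, Finset.card_range, nsmul_eq_mul]
      _ ≤ Real.sqrt 2 * (3 * k + 2) * 2^m := by
          push_cast
          have h0 : (0:ℝ) ≤ Real.sqrt 2 * 2^m := by positivity
          calc 3 * (k:ℝ) * (Real.sqrt 2 * 2^m)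
              ≤ (3 * (k:ℝ) + 2) * (Real.sqrt 2 * 2^m) :=
                mul_le_mul_of_nonneg_right (by linarith) h0
            _ = Real.sqrt 2 * (3 * (k:ℝ) + 2) * 2^m := by ring
end

section
/- (Online gradient descent regret bound.) Let f₁, …, f_T : ℝ^d → ℝ be convex differentiable functions and fix η > 0. Fix θ₁ ∈ ℝ^d and define θ_{t+1} = θ_t − η∇f_t(θ_t). Then for every θ* ∈ ℝ^d: (1/T)∑_{t=1}^T f_t(θ_t) ≤ (1/T)∑_{t=1}^T f_t(θ*) + ‖θ*‖²/(2ηT) + ‖θ₁‖·(1/T)∑_{t=1}^T ‖∇f_t(θ_t)‖ + η·(1/T)∑_{t=1}^T ‖∇f_t(θ_t)‖². -/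
open Finset
open scoped BigOperators
open scoped RealInnerProductSpace

/-- Convexity first-order condition via the gradient. -/
lemma grad_convex_ineq {E : Type*} [NormedAddCommGroup E] [InnerProductSpace ℝ E]
    [CompleteSpace E]
    {f : E → ℝ} (hconv : ConvexOn ℝ Set.univ f) {x gx : E}
    (hg : HasGradientAt f gx x) (y : E) : f x + ⟪gx, y - x⟫ ≤ f y := by
  set φ : ℝ → ℝ := fun s => f (x + s • (y - x)) with hφ
  have hline : ∀ s : ℝ, HasDerivAt (fun s : ℝ => x + s • (y - x)) (y - x) s := by
    intro s
    simpa using ((hasDerivAt_id s).smul_const (y - x)).const_add x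
  have hder : HasDerivAt φ ⟪gx, y - x⟫ 0 := by
    have hfd : HasFDerivAt f ((InnerProductSpace.toDual ℝ E) gx) (x + (0:ℝ) • (y - x)) := by
      simpa using hasGradientAt_iff_hasFDerivAt.mp hg
    have := hfd.comp_hasDerivAt 0 (hline 0)
    simpa [φ, InnerProductSpace.toDual_apply_apply, Function.comp_def] using this
  have hφconv : ConvexOn ℝ Set.univ φ := by
    have := hconv.comp_affineMap (AffineMap.lineMap x y)
    have h2 : (f ∘ (AffineMap.lineMap x y) : ℝ → ℝ) = φ := by
      funext s
      simp only [Function.comp, AffineMap.lineMap_apply_module, φ]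
      congr 1
      module
    simpa [h2] using this
  have := hφconv.le_slope_of_hasDerivAt (Set.mem_univ (0:ℝ)) (Set.mem_univ (1:ℝ)) one_pos hder
  have hs : slope φ 0 1 = f y - f x := by
    simp [slope_def_field, φ]
  rw [hs] at this
  linarith

/-- Expansion of the squared norm after a gradient step. -/
lemma step_inner_eq {E : Type*} [NormedAddCommGroup E] [InnerProductSpace ℝ E]
    (η : ℝ) (hη : 0 < η) (a b : E) :
    ⟪b, a⟫ = (‖a‖ ^ 2 - ‖a - η • b‖ ^ 2) / (2 * η) + (η / 2) * ‖b‖ ^ 2 := by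
  have h : ‖a - η • b‖ ^ 2 = ‖a‖ ^ 2 - 2 * (η * ⟪b, a⟫) + η ^ 2 * ‖b‖ ^ 2 := by
    rw [@norm_sub_sq_real]
    rw [real_inner_smul_right, norm_smul, real_inner_comm]
    simp [abs_of_pos hη, mul_pow]
  rw [h]
  field_simp
  ring

/-- Online gradient descent regret bound with arbitrary starting point `θ₀`. -/
theorem stmt_12 {d : ℕ} (T : ℕ) (hT : 0 < T) (η : ℝ) (hη : 0 < η)
    (f : ℕ → EuclideanSpace ℝ (Fin d) → ℝ)
    (g : ℕ → EuclideanSpace ℝ (Fin d) → EuclideanSpace ℝ (Fin d))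
    (hconv : ∀ t, ConvexOn ℝ Set.univ (f t))
    (hgrad : ∀ t θ', HasGradientAt (f t) (g t θ') θ')
    (θ : ℕ → EuclideanSpace ℝ (Fin d))
    (hupd : ∀ t, θ (t + 1) = θ t - η • g t (θ t)) :
    ∀ θs : EuclideanSpace ℝ (Fin d),
      (1 / T : ℝ) * ∑ t ∈ Finset.range T, f t (θ t) ≤
        (1 / T : ℝ) * ∑ t ∈ Finset.range T, f t θs + ‖θs‖ ^ 2 / (2 * η * T) +
        ‖θ 0‖ * ((1 / T : ℝ) * ∑ t ∈ Finset.range T, ‖g t (θ t)‖) +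
        η * ((1 / T : ℝ) * ∑ t ∈ Finset.range T, ‖g t (θ t)‖ ^ 2) := by
  intro θs
  set w : ℕ → EuclideanSpace ℝ (Fin d) := fun t => θ t - θ 0 - θs with hw
  have hwstep : ∀ t, w (t + 1) = w t - η • g t (θ t) := by
    intro t
    simp only [w, hupd t]
    abel
  -- per-step bound
  have hstep : ∀ t, f t (θ t) ≤ f t θs +
      (‖w t‖ ^ 2 - ‖w (t + 1)‖ ^ 2) / (2 * η) + (η / 2) * ‖g t (θ t)‖ ^ 2 +
      ‖θ 0‖ * ‖g t (θ t)‖ := by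
    intro t
    have h1 : f t (θ t) + ⟪g t (θ t), θs - θ t⟫ ≤ f t θs :=
      grad_convex_ineq (hconv t) (hgrad t (θ t)) θs
    have h2 : ⟪g t (θ t), θ t - θs⟫ = ⟪g t (θ t), w t⟫ + ⟪g t (θ t), θ 0⟫ := by
      rw [← inner_add_right]
      congr 1
      simp only [w]
      abel
    have h3 : ⟪g t (θ t), w t⟫ =
        (‖w t‖ ^ 2 - ‖w (t + 1)‖ ^ 2) / (2 * η) + (η / 2) * ‖g t (θ t)‖ ^ 2 := by
      rw [hwstep t]
      exact step_inner_eq η hη (w t) (g t (θ t))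
    have h4 : ⟪g t (θ t), θ 0⟫ ≤ ‖g t (θ t)‖ * ‖θ 0‖ := real_inner_le_norm _ _
    have h5 : ⟪g t (θ t), θs - θ t⟫ = -⟪g t (θ t), θ t - θs⟫ := by
      rw [← inner_neg_right]; congr 1; abel
    nlinarith [h1, h2, h3, h4, h5]
  -- sum over t
  have hsum : ∑ t ∈ Finset.range T, f t (θ t) ≤
      ∑ t ∈ Finset.range T, f t θs + ‖θs‖ ^ 2 / (2 * η) +
      (η / 2) * ∑ t ∈ Finset.range T, ‖g t (θ t)‖ ^ 2 +
      ‖θ 0‖ * ∑ t ∈ Finset.range T, ‖g t (θ t)‖ := by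
    have hle : ∑ t ∈ Finset.range T, f t (θ t) ≤
        ∑ t ∈ Finset.range T, (f t θs +
          (‖w t‖ ^ 2 - ‖w (t + 1)‖ ^ 2) / (2 * η) + (η / 2) * ‖g t (θ t)‖ ^ 2 +
          ‖θ 0‖ * ‖g t (θ t)‖) :=
      Finset.sum_le_sum fun t _ => hstep t
    have htel : ∑ t ∈ Finset.range T, (‖w t‖ ^ 2 - ‖w (t + 1)‖ ^ 2) =
        ‖w 0‖ ^ 2 - ‖w T‖ ^ 2 := Finset.sum_range_sub' (fun t => ‖w t‖ ^ 2) T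
    have hw0 : ‖w 0‖ = ‖θs‖ := by
      simp only [w]
      rw [show θ 0 - θ 0 - θs = -θs by abel, norm_neg]
    have hwT : (0:ℝ) ≤ ‖w T‖ ^ 2 := by positivity
    rw [Finset.sum_add_distrib, Finset.sum_add_distrib, Finset.sum_add_distrib,
      ← Finset.sum_div, htel, ← Finset.mul_sum, ← Finset.mul_sum] at hle
    rw [hw0] at hle
    have : (‖θs‖ ^ 2 - ‖w T‖ ^ 2) / (2 * η) ≤ ‖θs‖ ^ 2 / (2 * η) := by
      apply div_le_div_of_nonneg_right _ (by positivity)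
      linarith
    linarith
  -- divide by T
  have hT' : (0:ℝ) < T := by exact_mod_cast hT
  have hS2 : (0:ℝ) ≤ ∑ t ∈ Finset.range T, ‖g t (θ t)‖ ^ 2 :=
    Finset.sum_nonneg fun t _ => by positivity
  have key : ∑ t ∈ Finset.range T, f t (θ t) ≤
      ∑ t ∈ Finset.range T, f t θs + ‖θs‖ ^ 2 / (2 * η) +
      ‖θ 0‖ * ∑ t ∈ Finset.range T, ‖g t (θ t)‖ +
      η * ∑ t ∈ Finset.range T, ‖g t (θ t)‖ ^ 2 := by
    nlinarith [hsum, hS2, hη]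
  calc (1 / T : ℝ) * ∑ t ∈ Finset.range T, f t (θ t)
      ≤ (1 / T : ℝ) * (∑ t ∈ Finset.range T, f t θs + ‖θs‖ ^ 2 / (2 * η) +
          ‖θ 0‖ * ∑ t ∈ Finset.range T, ‖g t (θ t)‖ +
          η * ∑ t ∈ Finset.range T, ‖g t (θ t)‖ ^ 2) := by
        apply mul_le_mul_of_nonneg_left key
        positivity
    _ = (1 / T : ℝ) * ∑ t ∈ Finset.range T, f t θs + ‖θs‖ ^ 2 / (2 * η * T) +
        ‖θ 0‖ * ((1 / T : ℝ) * ∑ t ∈ Finset.range T, ‖g t (θ t)‖) +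
        η * ((1 / T : ℝ) * ∑ t ∈ Finset.range T, ‖g t (θ t)‖ ^ 2) := by
        field_simp
end

section
/- Let f₁, …, f_T : ℝ^d → ℝ be convex differentiable, η > 0, θ₁ ∈ ℝ^d, and θ_{t+1} = θ_t − η∇f_t(θ_t). Define R_t(θ) = ∑_{i=1}^t ⟨θ, ∇f_i(θ_i)⟩ + ‖θ‖²/(2η). Then for every θ* and every T ≥ 1: ∑_{t=1}^T ⟨θ_{t+1} − θ₁, ∇f_t(θ_t)⟩ ≤ R_T(θ*). -/
open Finset
open scoped BigOperators RealInnerProductSpace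

/-- The "be-the-leader" lemma for online gradient descent: with
`R_T(θ) = ∑_{t<T} ⟨θ, ∇f_t(θ_t)⟩ + ‖θ‖²/(2η)`, for every `θ*` and `T ≥ 1`,
`∑_{t<T} ⟨θ_{t+1} − θ₀, ∇f_t(θ_t)⟩ ≤ R_T(θ*)`. -/
theorem stmt_13 {d : ℕ} (η : ℝ) (hη : 0 < η)
    (f : ℕ → EuclideanSpace ℝ (Fin d) → ℝ)
    (g : ℕ → EuclideanSpace ℝ (Fin d) → EuclideanSpace ℝ (Fin d))
    (hconv : ∀ t, ConvexOn ℝ Set.univ (f t))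
    (hgrad : ∀ t θ', HasGradientAt (f t) (g t θ') θ')
    (θ : ℕ → EuclideanSpace ℝ (Fin d))
    (hupd : ∀ t, θ (t + 1) = θ t - η • g t (θ t)) :
    ∀ (θs : EuclideanSpace ℝ (Fin d)) (T : ℕ), 1 ≤ T →
      ∑ t ∈ Finset.range T, ⟪θ (t + 1) - θ 0, g t (θ t)⟫ ≤
        (∑ t ∈ Finset.range T, ⟪θs, g t (θ t)⟫) + ‖θs‖ ^ 2 / (2 * η) := by
  intro θs T hT
  set S : ℕ → EuclideanSpace ℝ (Fin d) := fun t => ∑ i ∈ Finset.range t, g i (θ i) with hS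
  -- θ (t) - θ 0 = -η • S t
  have hθ : ∀ t, θ t - θ 0 = (-η) • S t := by
    intro t
    induction t with
    | zero => simp [hS]
    | succ n ih =>
      have hs : S (n + 1) = S n + g n (θ n) := by
        simp [hS, Finset.sum_range_succ]
      rw [hupd n, hs, smul_add, ← ih]
      simp only [neg_smul]
      abel
  have hSsucc : ∀ t, g t (θ t) = S (t + 1) - S t := by
    intro t; rw [hS]; simp [Finset.sum_range_succ]
  -- key pointwise bound
  have hkey : ∀ t, (‖S (t+1)‖ ^ 2 - ‖S t‖ ^ 2) / 2 ≤ ⟪S (t+1), g t (θ t)⟫ := by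
    intro t
    rw [hSsucc t, inner_sub_right, real_inner_self_eq_norm_sq]
    have h1 : ⟪S (t+1), S t⟫ ≤ (‖S (t+1)‖ ^ 2 + ‖S t‖ ^ 2) / 2 := by
      have := real_inner_le_norm (S (t+1)) (S t)
      nlinarith [sq_nonneg (‖S (t+1)‖ - ‖S t‖)]
    linarith
  -- sum bound
  have hsum : ‖S T‖ ^ 2 / 2 ≤ ∑ t ∈ Finset.range T, ⟪S (t+1), g t (θ t)⟫ := by
    have htel : ∑ t ∈ Finset.range T, (‖S (t+1)‖ ^ 2 - ‖S t‖ ^ 2) / 2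
        = ‖S T‖ ^ 2 / 2 := by
      rw [← Finset.sum_div, Finset.sum_range_sub (fun t => ‖S t‖ ^ 2)]
      simp [hS]
    rw [← htel]
    exact Finset.sum_le_sum fun t _ => hkey t
  -- LHS rewrite
  have hLHS : ∑ t ∈ Finset.range T, ⟪θ (t + 1) - θ 0, g t (θ t)⟫
      = (-η) * ∑ t ∈ Finset.range T, ⟪S (t+1), g t (θ t)⟫ := by
    rw [Finset.mul_sum]
    refine Finset.sum_congr rfl fun t _ => ?_
    rw [hθ (t+1), real_inner_smul_left]
  rw [hLHS]
  have h1 : (-η) * ∑ t ∈ Finset.range T, ⟪S (t+1), g t (θ t)⟫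
      ≤ (-η) * (‖S T‖ ^ 2 / 2) := by
    apply mul_le_mul_of_nonpos_left hsum (by linarith)
  have hRHS : ∑ t ∈ Finset.range T, ⟪θs, g t (θ t)⟫ = ⟪θs, S T⟫ := by
    rw [hS, inner_sum]
  rw [hRHS]
  have hnn : 0 ≤ ‖θs + η • S T‖ ^ 2 := sq_nonneg _
  have hexp : ‖θs + η • S T‖ ^ 2
      = ‖θs‖ ^ 2 + 2 * η * ⟪θs, S T⟫ + η ^ 2 * ‖S T‖ ^ 2 := by
    rw [← real_inner_self_eq_norm_sq, inner_add_add_self]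
    simp only [real_inner_smul_left, real_inner_smul_right,
      real_inner_comm (S T) θs, real_inner_self_eq_norm_sq]
    rw [norm_smul, Real.norm_eq_abs, abs_of_pos hη, mul_pow]
    ring
  rw [hexp] at hnn
  have h2 : (-η) * (‖S T‖ ^ 2 / 2) ≤ ⟪θs, S T⟫ + ‖θs‖ ^ 2 / (2 * η) := by
    have h2η : (0:ℝ) < 2 * η := by linarith
    rw [← sub_nonneg]
    have heq : ⟪θs, S T⟫ + ‖θs‖ ^ 2 / (2 * η) - (-η) * (‖S T‖ ^ 2 / 2)
        = (‖θs‖ ^ 2 + 2 * η * ⟪θs, S T⟫ + η ^ 2 * ‖S T‖ ^ 2) / (2 * η) := by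
      field_simp
      ring
    rw [heq]
    exact div_nonneg hnn h2η.le
  linarith
end
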